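/- Let X be a compact convex subset of R^d and let g : R^d -> R be continuously differentiable on a neighborhood of X. Suppose C is a nonempty subset of X such that <grad g(x), x - p> >= 0 for all x in X and all p in C, with equality if and only if x in C. Then C is closed, C is convex, and C consists precisely of the global minimizers of g over X, i.e. C = argmin_{x in X} g(x). -/

import Mathlib

open scoped RealInnerProductSpace

/-- If a nonempty subset `C` of a compact convex set `X ⊆ ℝ^d` satisfies the
variational coherence condition `⟪∇g(x), x - p⟫ ≥ 0` for all `x ∈ X`, `p ∈ C`, with equality
iff `x ∈ C`, then `C` is closed, convex, and equals the set of global minimizers of `g` on `X`. -/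
theorem coherent_set_closed_convex_eq_argmin {d : ℕ}
    (X : Set (EuclideanSpace ℝ (Fin d))) (hXcompact : IsCompact X) (hXconvex : Convex ℝ X)
    (g : EuclideanSpace ℝ (Fin d) → ℝ)
    (U : Set (EuclideanSpace ℝ (Fin d))) (hUopen : IsOpen U) (hXU : X ⊆ U)
    (hgC1 : ContDiffOn ℝ 1 g U)
    (C : Set (EuclideanSpace ℝ (Fin d))) (hCne : C.Nonempty) (hCX : C ⊆ X)
    (hcoh : ∀ x ∈ X, ∀ p ∈ C, 0 ≤ ⟪gradient g x, x - p⟫ ∧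
      (⟪gradient g x, x - p⟫ = 0 ↔ x ∈ C)) :
    IsClosed C ∧ Convex ℝ C ∧ C = {x ∈ X | ∀ y ∈ X, g x ≤ g y} := by
  obtain ⟨p₀, hp₀⟩ := hCne
  have hdiff : ∀ x ∈ U, DifferentiableAt ℝ g x := fun x hx =>
    (hgC1.differentiableOn one_ne_zero).differentiableAt (hUopen.mem_nhds hx)
  have hgrad_cont : ContinuousOn (fun x => gradient g x) U := by
    have h1 := hgC1.continuousOn_fderiv_of_isOpen hUopen le_rfl
    exact (InnerProductSpace.toDual ℝ _).symm.continuous.comp_continuousOn h1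
  -- chain rule along lines
  have hline : ∀ (a v : EuclideanSpace ℝ (Fin d)) (t : ℝ), a + t • v ∈ U →
      HasDerivAt (fun s : ℝ => g (a + s • v)) ⟪gradient g (a + t • v), v⟫ t := by
    intro a v t hmem
    have hL : HasDerivAt (fun s : ℝ => a + s • v) v t := by
      simpa using ((hasDerivAt_id t).smul_const v).const_add a
    have hg := (hdiff _ hmem).hasGradientAt
    have := hg.hasFDerivAt.comp_hasDerivAt t hL
    simpa [InnerProductSpace.toDual_apply_apply, Function.comp_def] using this
  -- C consists of minimizers
  have hmin : ∀ p ∈ C, ∀ y ∈ X, g p ≤ g y := by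
    intro p hp y hy
    have hpX := hCX hp
    have hmem : ∀ s ∈ Set.Icc (0:ℝ) 1, p + s • (y - p) ∈ X := fun s hs =>
      hXconvex.add_smul_sub_mem hpX hy hs
    set φ : ℝ → ℝ := fun s => g (p + s • (y - p)) with hφ
    have hd : ∀ s ∈ Set.Icc (0:ℝ) 1,
        HasDerivAt φ ⟪gradient g (p + s • (y - p)), y - p⟫ s :=
      fun s hs => hline p (y - p) s (hXU (hmem s hs))
    have hmono : MonotoneOn φ (Set.Icc 0 1) := by
      apply monotoneOn_of_deriv_nonneg (convex_Icc 0 1)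
      · exact fun s hs => (hd s hs).continuousAt.continuousWithinAt
      · intro s hs
        rw [interior_Icc] at hs
        exact (hd s (Set.mem_Icc_of_Ioo hs)).differentiableAt.differentiableWithinAt
      · intro s hs
        rw [interior_Icc] at hs
        rw [(hd s (Set.mem_Icc_of_Ioo hs)).deriv]
        have hxs : p + s • (y - p) ∈ X := hmem s (Set.mem_Icc_of_Ioo hs)
        have h0 := (hcoh _ hxs p hp).1
        have heq : p + s • (y - p) - p = s • (y - p) := by abel
        rw [heq, real_inner_smul_right] at h0
        nlinarith [hs.1]
    have h01 := hmono (Set.left_mem_Icc.mpr one_pos.le)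
      (Set.right_mem_Icc.mpr one_pos.le) one_pos.le
    simpa [hφ] using h01
  -- closedness
  have hC_eq : C = X ∩ (fun x => ⟪gradient g x, x - p₀⟫) ⁻¹' {(0:ℝ)} := by
    ext x
    constructor
    · intro hx
      exact ⟨hCX hx, (hcoh x (hCX hx) p₀ hp₀).2.mpr hx⟩
    · rintro ⟨hxX, hx0⟩
      exact (hcoh x hxX p₀ hp₀).2.mp hx0
  have hclosed : IsClosed C := by
    rw [hC_eq]
    have hfc : ContinuousOn (fun x => ⟪gradient g x, x - p₀⟫) X :=
      (hgrad_cont.mono hXU).inner ((continuous_id.sub continuous_const).continuousOn)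
    exact hfc.preimage_isClosed_of_isClosed hXcompact.isClosed isClosed_singleton
  refine ⟨hclosed, ?_, ?_⟩
  · -- convexity
    intro p hp q hq a b ha hb hab
    set x := a • p + b • q with hxdef
    have hxX : x ∈ X := hXconvex (hCX hp) (hCX hq) ha hb hab
    rcases ha.lt_or_eq with hapos | ha0
    · have hx0 : a • (x - p) + b • (x - q) = 0 := by
        have h1 : a • (x - p) + b • (x - q) = (a + b) • x - (a • p + b • q) := by
          simp only [smul_sub, add_smul]; abel
        rw [h1, hab, one_smul, ← hxdef, sub_self]
      have hsum : a * ⟪gradient g x, x - p⟫ + b * ⟪gradient g x, x - q⟫ = 0 := by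
        rw [← real_inner_smul_right, ← real_inner_smul_right, ← inner_add_right, hx0,
          inner_zero_right]
      have h1 := (hcoh x hxX p hp).1
      have h2 := (hcoh x hxX q hq).1
      have : ⟪gradient g x, x - p⟫ = 0 := by nlinarith
      exact (hcoh x hxX p hp).2.mp this
    · have hb1 : b = 1 := by linarith
      have : x = q := by simp [hxdef, ← ha0, hb1]
      exact this ▸ hq
  · -- equals argmin
    ext x
    constructor
    · intro hx
      exact ⟨hCX hx, hmin x hx⟩
    · rintro ⟨hxX, hxmin⟩
      by_contra hxC
      have h1 := (hcoh x hxX p₀ hp₀).1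
      have hne : ⟪gradient g x, x - p₀⟫ ≠ 0 := fun h => hxC ((hcoh x hxX p₀ hp₀).2.mp h)
      have hapos : 0 < ⟪gradient g x, x - p₀⟫ := lt_of_le_of_ne h1 (Ne.symm hne)
      set v := p₀ - x with hvdef
      set h : ℝ → ℝ := fun s => ⟪gradient g (x + s • v), v⟫ with hhdef
      have hcont : ContinuousAt h 0 := by
        have h1c : ContinuousAt (fun s : ℝ => x + s • v) 0 :=
          (continuous_const.add (continuous_id.smul continuous_const)).continuousAt
        have h2c : ContinuousAt (fun z => gradient g z) (x + (0:ℝ) • v) := by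
          rw [zero_smul, add_zero]
          exact hgrad_cont.continuousAt (hUopen.mem_nhds (hXU hxX))
        exact (ContinuousAt.comp (x := (0:ℝ)) h2c h1c).inner (𝕜 := ℝ) continuousAt_const
      have hneg : h 0 < 0 := by
        have : h 0 = -⟪gradient g x, x - p₀⟫ := by
          simp only [hhdef, zero_smul, add_zero, hvdef]
          rw [← neg_sub x p₀, inner_neg_right]
        rw [this]
        linarith
      have hmem0 : h ⁻¹' Set.Iio 0 ∈ nhds (0:ℝ) := hcont (Iio_mem_nhds hneg)
      obtain ⟨δ, hδpos, hδ⟩ := Metric.mem_nhds_iff.mp hmem0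
      set ε : ℝ := min (δ / 2) 1 with hεdef
      have hεpos : 0 < ε := lt_min (by linarith) one_pos
      have hε1 : ε ≤ 1 := min_le_right _ _
      set ψ : ℝ → ℝ := fun s => g (x + s • v) with hψdef
      have hdψ : ∀ s ∈ Set.Icc (0:ℝ) ε, HasDerivAt ψ (h s) s := by
        intro s hs
        have hsX : x + s • v ∈ X :=
          hXconvex.add_smul_sub_mem hxX (hCX hp₀) ⟨hs.1, le_trans hs.2 hε1⟩
        exact hline x v s (hXU hsX)
      have hanti : StrictAntiOn ψ (Set.Icc 0 ε) := by
        apply strictAntiOn_of_deriv_neg (convex_Icc 0 ε)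
        · exact fun s hs => (hdψ s hs).continuousAt.continuousWithinAt
        · intro s hs
          rw [interior_Icc] at hs
          rw [(hdψ s (Set.mem_Icc_of_Ioo hs)).deriv]
          have : s ∈ Metric.ball (0:ℝ) δ := by
            rw [Metric.mem_ball, dist_zero_right, Real.norm_eq_abs, abs_of_pos hs.1]
            calc s < ε := hs.2
              _ ≤ δ / 2 := min_le_left _ _
              _ < δ := by linarith
          exact hδ this
      have hlt : ψ ε < ψ 0 :=
        hanti (Set.left_mem_Icc.mpr hεpos.le) (Set.right_mem_Icc.mpr hεpos.le) hεpos
      have hεX : x + ε • v ∈ X :=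
        hXconvex.add_smul_sub_mem hxX (hCX hp₀) ⟨hεpos.le, hε1⟩
      have hge := hxmin _ hεX
      have hψ0 : ψ 0 = g x := by simp [hψdef]
      rw [hψ0] at hlt
      exact absurd hge (not_le.mpr hlt)
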